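/- Let r : ℤ → ℝ² be a nondegenerate discrete planar curve, closed with period 6, with t_{k+3} = −t_k and κ_k > 0 for all k ∈ ℤ (a convex hexagon with parallel and equi-length opposite sides; in particular κ_n = κ_{n+3} = 1/κ̄_{n+1} and κ_n·κ_{n+1}·κ_{n+2} = 1 for all n). Let F denote the inverse pentagram map, F(r)(k) = r(k) + (κ_k/κ̄_k)·(r(k) − r(k−1)). Then F(r) and F(F(r)) are nondegenerate, and the curvatures of the second iterate are those of r shifted by one index: the first and second centroaffine curvatures of F(F(r)) at n equal κ_{n+1} and κ̄_{n+1} respectively, for all n ∈ ℤ. Consequently F(F(r)) is affinely equivalent to r, i.e. convex hexagons with parallel and equi-length opposite sides are periodically stable under the inverse pentagram map. -/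

import Mathlib

/-- Planar determinant of two vectors in ℝ². -/
def det2 (u v : Fin 2 → ℝ) : ℝ := u 0 * v 1 - u 1 * v 0

/-- Edge tangent vector of a discrete planar curve. -/
def tang2 (r : ℤ → Fin 2 → ℝ) (k : ℤ) : Fin 2 → ℝ := r (k + 1) - r k

/-- Nondegeneracy of a discrete planar curve. -/
def Nondeg2 (r : ℤ → Fin 2 → ℝ) : Prop :=
  ∀ k : ℤ, det2 (tang2 r (k - 1)) (tang2 r k) ≠ 0

/-- First centroaffine curvature. -/
noncomputable def kappa2 (r : ℤ → Fin 2 → ℝ) (k : ℤ) : ℝ :=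
  det2 (tang2 r k) (tang2 r (k + 1)) / det2 (tang2 r (k - 1)) (tang2 r k)

/-- Second centroaffine curvature. -/
noncomputable def kbar2 (r : ℤ → Fin 2 → ℝ) (k : ℤ) : ℝ :=
  det2 (tang2 r (k - 1)) (tang2 r (k + 1)) / det2 (tang2 r (k - 1)) (tang2 r k)

/-- The inverse pentagram map, expressed in centroaffine invariants. -/
noncomputable def invPentagram (r : ℤ → Fin 2 → ℝ) (k : ℤ) : Fin 2 → ℝ :=
  r k + (kappa2 r k / kbar2 r k) • (r k - r (k - 1))

/-- Convex hexagons with parallel, equi-length opposite sides are periodically stable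
under the inverse pentagram map: the second iterate has the curvatures of the original
hexagon shifted by one index, hence is affinely equivalent to it. -/
noncomputable def dd (r : ℤ → Fin 2 → ℝ) (k : ℤ) : ℝ := det2 (tang2 r k) (tang2 r (k+1))
noncomputable def Nval (r : ℤ → Fin 2 → ℝ) (k : ℤ) : ℝ :=
  dd r (k-1) * dd r k + dd r k * dd r (k+1) + dd r (k+1) * dd r (k-1)

lemma det2_neg_left (u v : Fin 2 → ℝ) : det2 (-u) v = -det2 u v := by
  simp only [det2, Pi.neg_apply]; ring
lemma det2_neg_neg (u v : Fin 2 → ℝ) : det2 (-u) (-v) = det2 u v := by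
  simp only [det2, Pi.neg_apply]; ring
lemma det2_swap (u v : Fin 2 → ℝ) : det2 u v = -det2 v u := by
  simp only [det2]; ring
lemma det2_self (u : Fin 2 → ℝ) : det2 u u = 0 := by
  simp only [det2]; ring

lemma cramer_comp (u v w : Fin 2 → ℝ) (i : Fin 2) :
    det2 u v * w i = det2 u w * v i - det2 v w * u i := by
  fin_cases i <;> simp [det2] <;> ring

lemma det2_comb (a b c e : ℝ) (x y z w : Fin 2 → ℝ) :
    det2 (a • x - b • y) (c • z - e • w)
      = a*c*det2 x z - a*e*det2 x w - b*c*det2 y z + b*e*det2 y w := by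
  simp [det2, Pi.sub_apply, Pi.smul_apply, smul_eq_mul]; ring

lemma mulVec_comb (M : Matrix (Fin 2) (Fin 2) ℝ) (a b : ℝ) (x y : Fin 2 → ℝ) :
    M.mulVec (a • x - b • y) = a • M.mulVec x - b • M.mulVec y := by
  funext i
  simp only [Matrix.mulVec, dotProduct, Fin.sum_univ_two, Pi.sub_apply, Pi.smul_apply,
    smul_eq_mul]
  ring

section Curve
variable (c : ℤ → Fin 2 → ℝ)

lemma dd_def' (k : ℤ) : det2 (tang2 c (k-1)) (tang2 c k) = dd c (k-1) := by
  unfold dd; rw [show k-1+1 = k from by ring]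

lemma lem_per (hopp : ∀ k, tang2 c (k+3) = -tang2 c k) (k : ℤ) : dd c (k+3) = dd c k := by
  unfold dd
  rw [show k+3+1 = (k+1)+3 from by ring, hopp k, hopp (k+1), det2_neg_neg]

lemma lem_skip (hopp : ∀ k, tang2 c (k+3) = -tang2 c k) (k : ℤ) :
    det2 (tang2 c (k-1)) (tang2 c (k+1)) = dd c (k+1) := by
  have h := hopp (k-1)
  rw [show k-1+3 = k+2 from by ring] at h
  have h2 : tang2 c (k-1) = -tang2 c (k+2) := by rw [h, neg_neg]
  have h3 : dd c (k+1) = det2 (tang2 c (k+1)) (tang2 c (k+2)) := by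
    unfold dd; rw [show k+1+1 = k+2 from by ring]
  rw [h2, det2_neg_left, det2_swap (tang2 c (k+2)) (tang2 c (k+1)), neg_neg, h3]

lemma lem_kappa (k : ℤ) : kappa2 c k = dd c k / dd c (k-1) := by
  unfold kappa2
  rw [dd_def']
  rfl

lemma lem_kbar (hopp : ∀ k, tang2 c (k+3) = -tang2 c k) (k : ℤ) :
    kbar2 c k = dd c (k+1) / dd c (k-1) := by
  unfold kbar2
  rw [dd_def', lem_skip c hopp]

lemma lem_Nshift (hopp : ∀ k, tang2 c (k+3) = -tang2 c k) (k : ℤ) :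
    Nval c (k+1) = Nval c k := by
  unfold Nval
  rw [show k+1-1 = k from by ring, show k+1+1 = k+2 from by ring,
    show k+2 = (k-1)+3 from by ring, lem_per c hopp (k-1)]
  ring

lemma lem_3term_div (hd : ∀ k, dd c k ≠ 0)
    (hopp : ∀ k, tang2 c (k+3) = -tang2 c k) (k : ℤ) :
    tang2 c (k+1)
      = (dd c (k+1)/dd c (k-1)) • tang2 c k - (dd c k/dd c (k-1)) • tang2 c (k-1) := by
  funext i
  have h := cramer_comp (tang2 c (k-1)) (tang2 c k) (tang2 c (k+1)) i
  rw [dd_def', lem_skip c hopp k] at h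
  have h2 : det2 (tang2 c k) (tang2 c (k+1)) = dd c k := rfl
  rw [h2] at h
  simp only [Pi.sub_apply, Pi.smul_apply, smul_eq_mul]
  field_simp [hd (k-1)]
  linear_combination h

lemma lem_3term_div' (hd : ∀ k, dd c k ≠ 0)
    (hopp : ∀ k, tang2 c (k+3) = -tang2 c k) (k : ℤ) :
    tang2 c (k-1)
      = (dd c (k+1)/dd c k) • tang2 c k - (dd c (k-1)/dd c k) • tang2 c (k+1) := by
  funext i
  have h := cramer_comp (tang2 c (k-1)) (tang2 c k) (tang2 c (k+1)) i
  rw [dd_def', lem_skip c hopp k] at h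
  have h2 : det2 (tang2 c k) (tang2 c (k+1)) = dd c k := rfl
  rw [h2] at h
  simp only [Pi.sub_apply, Pi.smul_apply, smul_eq_mul]
  field_simp [hd k]
  linear_combination h

lemma lem_val (hd : ∀ k, dd c k ≠ 0) (hopp : ∀ k, tang2 c (k+3) = -tang2 c k) (k : ℤ) :
    invPentagram c k = c k + (dd c k / dd c (k+1)) • tang2 c (k-1) := by
  unfold invPentagram
  have h1 : c k - c (k-1) = tang2 c (k-1) := by
    unfold tang2; rw [show k-1+1 = k from by ring]
  have h2 : kappa2 c k / kbar2 c k = dd c k / dd c (k+1) := by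
    rw [lem_kappa, lem_kbar c hopp]
    field_simp
    rw [mul_comm (dd c k) (dd c (k-1)), mul_div_mul_left _ _ (hd (k-1))]
  rw [h1, h2]


lemma lem_tan (hd : ∀ k, dd c k ≠ 0) (hopp : ∀ k, tang2 c (k+3) = -tang2 c k) (k : ℤ) :
    tang2 (invPentagram c) k
      = (1 + dd c (k+1)/dd c (k-1)) • tang2 c k - (dd c k/dd c (k+1)) • tang2 c (k-1) := by
  have h : tang2 (invPentagram c) k = invPentagram c (k+1) - invPentagram c k := rfl
  rw [h, lem_val c hd hopp (k+1), lem_val c hd hopp k,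
    show k+1+1 = k+2 from by ring, show k+1-1 = k from by ring,
    show k+2 = (k-1)+3 from by ring, lem_per c hopp (k-1)]
  have ht : tang2 c k = c (k+1) - c k := rfl
  rw [ht]
  module

lemma lem_hoppp (hd : ∀ k, dd c k ≠ 0) (hopp : ∀ k, tang2 c (k+3) = -tang2 c k) (k : ℤ) :
    tang2 (invPentagram c) (k+3) = -tang2 (invPentagram c) k := by
  rw [lem_tan c hd hopp (k+3), lem_tan c hd hopp k,
    show k+3+1 = (k+1)+3 from by ring, show k+3-1 = (k-1)+3 from by ring,
    lem_per c hopp (k+1), lem_per c hopp (k-1), lem_per c hopp k,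
    hopp k]
  have h2 := hopp (k-1)
  rw [show k-1+3 = (k-1)+3 from by ring] at h2
  rw [h2]
  module

lemma lem_ddp (hd : ∀ k, dd c k ≠ 0) (hopp : ∀ k, tang2 c (k+3) = -tang2 c k) (k : ℤ) :
    dd (invPentagram c) k = Nval c k / dd c (k-1) := by
  have h : dd (invPentagram c) k
      = det2 (tang2 (invPentagram c) k) (tang2 (invPentagram c) (k+1)) := rfl
  rw [h, lem_tan c hd hopp k, lem_tan c hd hopp (k+1),
    show k+1+1 = k+2 from by ring, show k+1-1 = k from by ring,
    show k+2 = (k-1)+3 from by ring, lem_per c hopp (k-1),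
    det2_comb]
  have e1 : det2 (tang2 c k) (tang2 c (k+1)) = dd c k := rfl
  have e2 := det2_self (tang2 c k)
  have e3 := lem_skip c hopp k
  have e4 : det2 (tang2 c (k-1)) (tang2 c k) = dd c (k-1) := dd_def' c k
  rw [e1, e2, e3, e4]
  unfold Nval
  field_simp [hd (k-1), hd k, hd (k+1)]
  ring

end Curve

lemma dd_nd (c : ℤ → Fin 2 → ℝ) (hd : ∀ k, dd c k ≠ 0) : Nondeg2 c := by
  intro k
  have := hd (k-1)
  unfold dd at this
  rwa [show k-1+1 = k from by ring] at this

lemma lem_pos2 (c : ℤ → Fin 2 → ℝ) (hd : ∀ k, dd c k ≠ 0)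
    (hpos : ∀ k, 0 < dd c k * dd c (k+1)) (k : ℤ) : 0 < dd c k * dd c (k+2) := by
  have e : dd c k * dd c (k+2)
      = (dd c k * dd c (k+1)) * (dd c (k+1) * dd c (k+2)) / (dd c (k+1))^2 := by
    field_simp [hd (k+1)]
  have h1 := hpos (k+1)
  rw [show k+1+1 = k+2 from by ring] at h1
  rw [e]
  exact div_pos (mul_pos (hpos k) h1) (pow_two_pos_of_ne_zero (hd (k+1)))

lemma lem_Npos (c : ℤ → Fin 2 → ℝ) (hd : ∀ k, dd c k ≠ 0)
    (hpos : ∀ k, 0 < dd c k * dd c (k+1)) (k : ℤ) : 0 < Nval c k := by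
  have h1 := hpos (k-1)
  rw [show k-1+1 = k from by ring] at h1
  have h2 := hpos k
  have h3 := lem_pos2 c hd hpos (k-1)
  rw [show k-1+2 = k+1 from by ring] at h3
  unfold Nval
  nlinarith [h1, h2, h3]


theorem stmt_19 (r : ℤ → Fin 2 → ℝ) (hr : Nondeg2 r)
    (hclosed : ∀ k : ℤ, r (k + 6) = r k)
    (hopp : ∀ k : ℤ, tang2 r (k + 3) = -tang2 r k)
    (hκpos : ∀ k : ℤ, 0 < kappa2 r k) :
    Nondeg2 (invPentagram r) ∧
      Nondeg2 (invPentagram (invPentagram r)) ∧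
      (∀ n : ℤ, kappa2 (invPentagram (invPentagram r)) n = kappa2 r (n + 1) ∧
        kbar2 (invPentagram (invPentagram r)) n = kbar2 r (n + 1)) ∧
      ∃ (A : Matrix (Fin 2) (Fin 2) ℝ) (C : Fin 2 → ℝ), A.det ≠ 0 ∧
        ∀ k : ℤ, invPentagram (invPentagram r) k = A.mulVec (r (k + 1)) + C := by
  set R1 := invPentagram r with hR1
  set R2 := invPentagram R1 with hR2
  have hd0 : ∀ k, dd r k ≠ 0 := by
    intro k
    have h := hr (k+1)
    rw [show k+1-1 = k from by ring] at h
    exact h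
  have hpos0 : ∀ k, 0 < dd r k * dd r (k+1) := by
    intro k
    have h := hκpos (k+1)
    rw [lem_kappa r (k+1), show k+1-1 = k from by ring] at h
    rcases div_pos_iff.mp h with ⟨h1,h2⟩|⟨h1,h2⟩
    · exact mul_pos h2 h1
    · exact mul_pos_of_neg_of_neg h2 h1
  -- level 1
  have hdd1 : ∀ k, dd R1 k = Nval r k / dd r (k-1) := lem_ddp r hd0 hopp
  have hN0 : ∀ k, 0 < Nval r k := lem_Npos r hd0 hpos0
  have hd1 : ∀ k, dd R1 k ≠ 0 := by
    intro k; rw [hdd1 k]; exact div_ne_zero (ne_of_gt (hN0 k)) (hd0 (k-1))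
  have hopp1 : ∀ k, tang2 R1 (k+3) = -tang2 R1 k := lem_hoppp r hd0 hopp
  have hpos1 : ∀ k, 0 < dd R1 k * dd R1 (k+1) := by
    intro k
    rw [hdd1 k, hdd1 (k+1), show k+1-1 = k from by ring, div_mul_div_comm]
    have h := hpos0 (k-1); rw [show k-1+1 = k from by ring] at h
    exact div_pos (mul_pos (hN0 k) (hN0 (k+1))) h
  -- level 2
  have hdd2 : ∀ k, dd R2 k = Nval R1 k / dd R1 (k-1) := lem_ddp R1 hd1 hopp1
  have hN1 : ∀ k, 0 < Nval R1 k := lem_Npos R1 hd1 hpos1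
  have hd2 : ∀ k, dd R2 k ≠ 0 := by
    intro k; rw [hdd2 k]; exact div_ne_zero (ne_of_gt (hN1 k)) (hd1 (k-1))
  have hopp2 : ∀ k, tang2 R2 (k+3) = -tang2 R2 k := lem_hoppp R1 hd1 hopp1
  refine ⟨dd_nd R1 hd1, dd_nd R2 hd2, ?_, ?_⟩
  · intro n
    constructor
    · rw [lem_kappa R2 n, lem_kappa r (n+1), show n+1-1 = n from by ring]
      rw [hdd2 n, hdd2 (n-1), show n-1-1 = n-2 from by ring, hdd1 (n-1), hdd1 (n-2),
        show n-1-1 = n-2 from by ring, show n-2-1 = n-3 from by ring]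
      have p1 := lem_per r hopp (n-2); rw [show n-2+3 = n+1 from by ring] at p1
      have p2 := lem_per r hopp (n-3); rw [show n-3+3 = n from by ring] at p2
      rw [← p1, ← p2]
      have q1 := lem_Nshift R1 hopp1 (n-1); rw [show n-1+1 = n from by ring] at q1
      have q2 := lem_Nshift r hopp (n-2); rw [show n-2+1 = n-1 from by ring] at q2
      rw [q1, ← q2]
      field_simp [(hN0 (n-1)).ne', (hN1 (n-1)).ne', hd0 n, hd0 (n+1)]
    · rw [lem_kbar R2 hopp2 n, lem_kbar r hopp (n+1), show n+1-1 = n from by ring,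
        show n+1+1 = n+2 from by ring]
      have p0 := lem_per r hopp (n-1); rw [show n-1+3 = n+2 from by ring] at p0
      rw [p0]
      rw [hdd2 (n+1), hdd2 (n-1), show n+1-1 = n from by ring,
        show n-1-1 = n-2 from by ring, hdd1 n, hdd1 (n-2),
        show n-2-1 = n-3 from by ring]
      have p2 := lem_per r hopp (n-3); rw [show n-3+3 = n from by ring] at p2
      rw [← p2]
      have q1 := lem_Nshift R1 hopp1 n
      have q1' := lem_Nshift R1 hopp1 (n-1); rw [show n-1+1 = n from by ring] at q1'
      rw [q1, q1']
      have q2 := lem_Nshift r hopp (n-1); rw [show n-1+1 = n from by ring] at q2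
      have q2' := lem_Nshift r hopp (n-2); rw [show n-2+1 = n-1 from by ring] at q2'
      rw [q2, q2']
      field_simp [(hN0 (n-2)).ne', (hN1 (n-1)).ne', hd0 n, hd0 (n-1)]
  -- affine part
  · have hpB : ∀ n : ℤ, dd R2 n * dd r n = dd R2 (n-1) * dd r (n+1) := by
      intro n
      rw [hdd2 n, hdd2 (n-1), show n-1-1 = n-2 from by ring, hdd1 (n-1), hdd1 (n-2),
        show n-1-1 = n-2 from by ring, show n-2-1 = n-3 from by ring]
      have p1 := lem_per r hopp (n-2); rw [show n-2+3 = n+1 from by ring] at p1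
      have p2 := lem_per r hopp (n-3); rw [show n-3+3 = n from by ring] at p2
      rw [← p1, ← p2]
      have q1 := lem_Nshift R1 hopp1 (n-1); rw [show n-1+1 = n from by ring] at q1
      have q2 := lem_Nshift r hopp (n-2); rw [show n-2+1 = n-1 from by ring] at q2
      rw [q1, ← q2]
      field_simp
    have hdivB : ∀ n : ℤ, dd R2 n / dd R2 (n-1) = dd r (n+1) / dd r n := by
      intro n
      rw [div_eq_div_iff (hd2 (n-1)) (hd0 n)]
      linear_combination hpB n
    have hdivB' : ∀ n : ℤ, dd R2 (n-1) / dd R2 n = dd r n / dd r (n+1) := by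
      intro n
      rw [div_eq_div_iff (hd2 n) (hd0 (n+1))]
      linear_combination -(hpB n)
    have hdivC : ∀ n : ℤ, dd R2 (n+1) / dd R2 n = dd r (n+2) / dd r (n+1) := by
      intro n
      have h := hdivB (n+1)
      rwa [show n+1-1 = n from by ring, show n+1+1 = n+2 from by ring] at h
    have ha1 : ∀ n : ℤ, dd R2 (n+1) / dd R2 (n-1) = dd r (n+2) / dd r n := by
      intro n
      rw [div_eq_div_iff (hd2 (n-1)) (hd0 n)]
      apply mul_left_cancel₀ (hd0 (n+1))
      have h1 := hpB n
      have h2 := hpB (n+1)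
      rw [show n+1-1 = n from by ring, show n+1+1 = n+2 from by ring] at h2
      linear_combination dd r n * h2 + dd r (n+2) * h1
    have hdd0e : dd r 0 = tang2 r 0 0 * tang2 r 1 1 - tang2 r 0 1 * tang2 r 1 0 := by
      have h01 : (0:ℤ)+1 = 1 := by norm_num
      unfold dd
      rw [h01]
      rfl
    have hP' : dd R2 (-1) = tang2 R2 (-1) 0 * tang2 R2 0 1 - tang2 R2 (-1) 1 * tang2 R2 0 0 := by
      have h01 : (-1:ℤ)+1 = 0 := by norm_num
      unfold dd
      rw [h01]
      rfl
    obtain ⟨M, hM0, hM1, hMdet⟩ :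
        ∃ M : Matrix (Fin 2) (Fin 2) ℝ,
          M.mulVec (tang2 r 0) = tang2 R2 (-1) ∧ M.mulVec (tang2 r 1) = tang2 R2 0 ∧
            M.det ≠ 0 := by
      refine ⟨Matrix.of
        ![![ (tang2 R2 (-1) 0 * tang2 r 1 1 - tang2 R2 0 0 * tang2 r 0 1)/dd r 0,
             (tang2 R2 0 0 * tang2 r 0 0 - tang2 R2 (-1) 0 * tang2 r 1 0)/dd r 0 ],
          ![ (tang2 R2 (-1) 1 * tang2 r 1 1 - tang2 R2 0 1 * tang2 r 0 1)/dd r 0,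
             (tang2 R2 0 1 * tang2 r 0 0 - tang2 R2 (-1) 1 * tang2 r 1 0)/dd r 0 ]],
        ?_, ?_, ?_⟩
      · funext i
        fin_cases i
        · simp only [Matrix.mulVec, dotProduct, Fin.sum_univ_two, Matrix.of_apply,
            Matrix.cons_val', Matrix.cons_val_zero, Matrix.cons_val_one, Matrix.head_cons,
            Matrix.empty_val', Matrix.cons_val_fin_one, Matrix.head_fin_const, Fin.isValue,
            Fin.zero_eta, Fin.mk_one]
          field_simp [hd0 0]
          linear_combination -tang2 R2 (-1) 0 * hdd0e
        · simp only [Matrix.mulVec, dotProduct, Fin.sum_univ_two, Matrix.of_apply,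
            Matrix.cons_val', Matrix.cons_val_zero, Matrix.cons_val_one, Matrix.head_cons,
            Matrix.empty_val', Matrix.cons_val_fin_one, Matrix.head_fin_const, Fin.isValue,
            Fin.zero_eta, Fin.mk_one]
          field_simp [hd0 0]
          linear_combination -tang2 R2 (-1) 1 * hdd0e
      · funext i
        fin_cases i
        · simp only [Matrix.mulVec, dotProduct, Fin.sum_univ_two, Matrix.of_apply,
            Matrix.cons_val', Matrix.cons_val_zero, Matrix.cons_val_one, Matrix.head_cons,
            Matrix.empty_val', Matrix.cons_val_fin_one, Matrix.head_fin_const, Fin.isValue,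
            Fin.zero_eta, Fin.mk_one]
          field_simp [hd0 0]
          linear_combination -tang2 R2 0 0 * hdd0e
        · simp only [Matrix.mulVec, dotProduct, Fin.sum_univ_two, Matrix.of_apply,
            Matrix.cons_val', Matrix.cons_val_zero, Matrix.cons_val_one, Matrix.head_cons,
            Matrix.empty_val', Matrix.cons_val_fin_one, Matrix.head_fin_const, Fin.isValue,
            Fin.zero_eta, Fin.mk_one]
          field_simp [hd0 0]
          linear_combination -tang2 R2 0 1 * hdd0e
      · have hdet : (Matrix.of
            ![![ (tang2 R2 (-1) 0 * tang2 r 1 1 - tang2 R2 0 0 * tang2 r 0 1)/dd r 0,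
                 (tang2 R2 0 0 * tang2 r 0 0 - tang2 R2 (-1) 0 * tang2 r 1 0)/dd r 0 ],
              ![ (tang2 R2 (-1) 1 * tang2 r 1 1 - tang2 R2 0 1 * tang2 r 0 1)/dd r 0,
                 (tang2 R2 0 1 * tang2 r 0 0 - tang2 R2 (-1) 1 * tang2 r 1 0)/dd r 0 ]]).det
            = dd R2 (-1) / dd r 0 := by
          rw [Matrix.det_fin_two]
          simp only [Matrix.of_apply, Matrix.cons_val', Matrix.cons_val_zero,
            Matrix.cons_val_one, Matrix.head_cons, Matrix.empty_val',
            Matrix.cons_val_fin_one, Matrix.head_fin_const, Fin.isValue]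
          rw [hP', hdd0e]
          have hne : tang2 r 0 0 * tang2 r 1 1 - tang2 r 0 1 * tang2 r 1 0 ≠ 0 :=
            hdd0e ▸ hd0 0
          rw [div_mul_div_comm, div_mul_div_comm, ← sub_div, div_eq_div_iff (mul_ne_zero hne hne) hne]
          ring
        rw [hdet]
        exact div_ne_zero (hd2 (-1)) (hd0 0)
    -- propagate: tang2 R2 k = M.mulVec (tang2 r (k+1)) for all k
    have Qcast : ∀ {a b : ℤ}, a = b →
        tang2 R2 a = M.mulVec (tang2 r (a+1)) →
        tang2 R2 b = M.mulVec (tang2 r (b+1)) := by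
      intro a b h ha; subst h; exact ha
    have Qup : ∀ k : ℤ, tang2 R2 (k-1) = M.mulVec (tang2 r (k-1+1)) →
        tang2 R2 k = M.mulVec (tang2 r (k+1)) →
        tang2 R2 (k+1) = M.mulVec (tang2 r (k+1+1)) := by
      intro k h1 h2
      rw [show k-1+1 = k from by ring] at h1
      rw [show k+1+1 = k+2 from by ring]
      have er2 := lem_3term_div R2 hd2 hopp2 k
      have er := lem_3term_div r hd0 hopp (k+1)
      rw [show k+1-1 = k from by ring, show k+1+1 = k+2 from by ring] at er
      rw [er2, h1, h2, er, mulVec_comb, ha1 k, hdivB k]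
    have Qdn : ∀ k : ℤ, tang2 R2 k = M.mulVec (tang2 r (k+1)) →
        tang2 R2 (k+1) = M.mulVec (tang2 r (k+1+1)) →
        tang2 R2 (k-1) = M.mulVec (tang2 r (k-1+1)) := by
      intro k h2 h3
      rw [show k+1+1 = k+2 from by ring] at h3
      rw [show k-1+1 = k from by ring]
      have er2 := lem_3term_div' R2 hd2 hopp2 k
      have er := lem_3term_div' r hd0 hopp (k+1)
      rw [show k+1-1 = k from by ring, show k+1+1 = k+2 from by ring] at er
      rw [er2, h2, h3, er, mulVec_comb, hdivC k, hdivB' k]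
    have Qall : ∀ k : ℤ, (tang2 R2 (k-1) = M.mulVec (tang2 r (k-1+1)) ∧
        tang2 R2 k = M.mulVec (tang2 r (k+1))) := by
      intro k
      induction k using Int.induction_on with
      | zero =>
        constructor
        · exact Qcast (show (-1:ℤ) = 0-1 from by ring)
            (by rw [show (-1:ℤ)+1 = 0 from by ring]; exact hM0.symm)
        · rw [show (0:ℤ)+1 = 1 from by norm_num]; exact hM1.symm
      | succ n ih =>
        refine ⟨Qcast (show (n:ℤ) = (n:ℤ)+1-1 from by ring) ih.2, ?_⟩
        exact Qup n ih.1 ih.2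
      | pred n ih =>
        refine ⟨?_, ih.1⟩
        exact Qdn (-(n:ℤ)-1) ih.1
          (Qcast (show (-(n:ℤ)) = (-(n:ℤ)-1)+1 from by ring) ih.2)
    have hQ : ∀ k : ℤ, tang2 R2 k = M.mulVec (tang2 r (k+1)) := fun k => (Qall k).2
    refine ⟨M, R2 0 - M.mulVec (r 1), hMdet, ?_⟩
    intro k
    induction k using Int.induction_on with
    | zero =>
      show R2 0 = M.mulVec (r (0+1)) + (R2 0 - M.mulVec (r 1))
      rw [show (0:ℤ)+1 = 1 from by norm_num]
      abel
    | succ n ih =>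
      have h := hQ (n:ℤ)
      have e1 : tang2 R2 (n:ℤ) = R2 ((n:ℤ)+1) - R2 (n:ℤ) := rfl
      have e2 : tang2 r ((n:ℤ)+1) = r ((n:ℤ)+1+1) - r ((n:ℤ)+1) := rfl
      rw [e1, e2, Matrix.mulVec_sub] at h
      have h2 : R2 ((n:ℤ)+1) = R2 (n:ℤ) + (M.mulVec (r ((n:ℤ)+1+1)) - M.mulVec (r ((n:ℤ)+1))) := by
        rw [← h]; abel
      rw [h2, ih]
      abel
    | pred n ih =>
      have h := hQ (-(n:ℤ)-1)
      have e1 : tang2 R2 (-(n:ℤ)-1) = R2 (-(n:ℤ)-1+1) - R2 (-(n:ℤ)-1) := rfl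
      have e2 : tang2 r (-(n:ℤ)-1+1) = r (-(n:ℤ)-1+1+1) - r (-(n:ℤ)-1+1) := rfl
      rw [e1, e2, Matrix.mulVec_sub, show -(n:ℤ)-1+1 = -(n:ℤ) from by ring,
        show -(n:ℤ)+1 = -(n:ℤ)+1 from rfl] at h
      have h2 : R2 (-(n:ℤ)-1) = R2 (-(n:ℤ)) - (M.mulVec (r (-(n:ℤ)+1)) - M.mulVec (r (-(n:ℤ)))) := by
        rw [← h]; abel
      rw [h2, ih, show -(n:ℤ)-1+1 = -(n:ℤ) from by ring]
      abel
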